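/- Assume ∼ on P is G-invariant (for every g ∈ G, x ∼ y implies x·g ∼ y·g), every fibre P_a (a ∈ M) is nonempty, and π is a submersion: for every infinitesimal k-simplex (a₀,…,a_k) in M and every x₀ ∈ P_{a₀} there exists an infinitesimal k-simplex (x₀,…,x_k) in P with first vertex x₀ and π(x_i) = a_i for all i. Then the assignments θ ↦ θ̌ with θ̌(a₀,…,a_k) = u₀ ∘ θ(u₀,…,u_k) ∘ u₀⁻¹ ∈ Φ(a₀,a₀) (computed using any infinitesimal k-simplex (u₀,…,u_k) in P with π(u_i) = a_i for all i) and α ↦ α̂ with α̂(u₀,…,u_k) = u₀⁻¹ ∘ α(π(u₀),…,π(u_k)) ∘ u₀ are well defined and are mutually inverse bijections between the set of horizontal equivariant G-valued k-forms on P and the set of gauge-valued k-forms on M. -/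

import Mathlib

open CategoryTheory

/-- The principal bundle `P`: arrows of the groupoid `Φ` with domain `e` and codomain
in a set `M` of objects.  For `x : Bdl e M`, `x.1` is the codomain `π x ∈ M` and
`x.2 : e ⟶ x.1` is the arrow itself. -/
def Bdl {Φ : Type*} [Groupoid Φ] (e : Φ) (M : Set Φ) : Type _ :=
  Σ a : M, e ⟶ (a : Φ)

/-- The right action of the group `G = Φ(e,e)` on `P` by precomposition:
`x · g = x ∘ g`. -/
def Bdl.act {Φ : Type*} [Groupoid Φ] {e : Φ} {M : Set Φ}
    (x : Bdl e M) (g : e ⟶ e) : Bdl e M :=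
  ⟨x.1, g ≫ x.2⟩

/-- A connection: to each pair `a ∼ b` in `M` it assigns an arrow `∇(a,b) : b ⟶ a`,
with `∇(a,a) = id` and `∇(b,a) = ∇(a,b)⁻¹`. -/
structure Conn {Φ : Type*} [Groupoid Φ] (e : Φ) (M : Set Φ) (nbM : M → M → Prop) where
  map : ∀ a b : M, nbM a b → ((b : Φ) ⟶ (a : Φ))
  map_refl : ∀ (a : M) (h : nbM a a), map a a h = 𝟙 (a : Φ)
  map_symm : ∀ (a b : M) (h : nbM a b) (h' : nbM b a),
    map b a h' = Groupoid.inv (map a b h)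

/-- The connection form `ω(x,y) = x⁻¹ ∘ ∇(π x, π y) ∘ y ∈ G`
(composition right-to-left; in Lean's diagrammatic order: `y ≫ ∇ ≫ x⁻¹`). -/
def connForm {Φ : Type*} [Groupoid Φ] {e : Φ} {M : Set Φ} {nbM : M → M → Prop}
    (D : Conn e M nbM) (x y : Bdl e M) (h : nbM x.1 y.1) : e ⟶ e :=
  y.2 ≫ D.map x.1 y.1 h ≫ Groupoid.inv x.2

/-- An infinitesimal `k`-simplex in `P`: a `(k+1)`-tuple of pairwise neighbours. -/
def IsSimplex {Φ : Type*} [Groupoid Φ] {e : Φ} {M : Set Φ}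
    (nbP : Bdl e M → Bdl e M → Prop) {k : ℕ} (u : Fin (k + 1) → Bdl e M) : Prop :=
  ∀ i j, nbP (u i) (u j)

/-- A `G`-valued `k`-form `θ` on `P` is horizontal if
`θ(u₀, u₁·g₁, …, u_k·g_k) = θ(u₀,…,u_k)` whenever both tuples are infinitesimal
`k`-simplices. -/
def Horizontal {Φ : Type*} [Groupoid Φ] {e : Φ} {M : Set Φ}
    (nbP : Bdl e M → Bdl e M → Prop) {k : ℕ}
    (θ : ∀ u : Fin (k + 1) → Bdl e M, IsSimplex nbP u → (e ⟶ e)) : Prop :=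
  ∀ (u : Fin (k + 1) → Bdl e M) (g : Fin k → (e ⟶ e))
    (hu : IsSimplex nbP u)
    (hu' : IsSimplex nbP (Fin.cases (u 0) (fun i => (u i.succ).act (g i)))),
    θ (Fin.cases (u 0) (fun i => (u i.succ).act (g i))) hu' = θ u hu

/-- A `G`-valued `k`-form `θ` on `P` is equivariant if
`θ(u₀·g, …, u_k·g) = g⁻¹ ∘ θ(u₀,…,u_k) ∘ g` whenever the shifted tuple is an
infinitesimal `k`-simplex. -/
def Equivariant {Φ : Type*} [Groupoid Φ] {e : Φ} {M : Set Φ}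
    (nbP : Bdl e M → Bdl e M → Prop) {k : ℕ}
    (θ : ∀ u : Fin (k + 1) → Bdl e M, IsSimplex nbP u → (e ⟶ e)) : Prop :=
  ∀ (u : Fin (k + 1) → Bdl e M) (g : e ⟶ e)
    (hu : IsSimplex nbP u)
    (hu' : IsSimplex nbP (fun i => (u i).act g)),
    θ (fun i => (u i).act g) hu' = g ≫ θ u hu ≫ Groupoid.inv g

/-- For a gauge-valued `k`-form `α` on `M`, the associated `G`-valued `k`-form
`α̂` on `P`: `α̂(u₀,…,u_k) = u₀⁻¹ ∘ α(π u₀, …, π u_k) ∘ u₀`. -/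
def hatForm {Φ : Type*} [Groupoid Φ] {e : Φ} {M : Set Φ}
    {nbM : M → M → Prop} {nbP : Bdl e M → Bdl e M → Prop}
    (hcompat : ∀ x y : Bdl e M, nbP x y → nbM x.1 y.1) {k : ℕ}
    (α : ∀ a : Fin (k + 1) → M, (∀ i j, nbM (a i) (a j)) → ((a 0 : Φ) ⟶ (a 0 : Φ)))
    (u : Fin (k + 1) → Bdl e M) (hu : IsSimplex nbP u) : e ⟶ e :=
  (u 0).2 ≫ α (fun i => (u i).1) (fun i j => hcompat _ _ (hu i j)) ≫ Groupoid.inv (u 0).2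

/-- the assignments `θ ↦ θ̌` (with
`θ̌(a₀,…,a_k) = u₀ ∘ θ(u₀,…,u_k) ∘ u₀⁻¹`, computed with any lift `(u₀,…,u_k)` of
`(a₀,…,a_k)`) and `α ↦ α̂` (with `α̂(u₀,…,u_k) = u₀⁻¹ ∘ α(π u₀,…,π u_k) ∘ u₀`)
are well defined and are mutually inverse bijections between the set of horizontal
equivariant `G`-valued `k`-forms on `P` and the set of gauge-valued `k`-forms on `M`.
Well-definedness of `θ ↦ θ̌` is expressed by the existence of a map `check` on
gauge simplices whose value at the projection of ANY lift is given by the formula. -/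
theorem stmt3 {Φ : Type*} [Groupoid Φ] (e : Φ) (M : Set Φ)
    (nbM : M → M → Prop) (nbP : Bdl e M → Bdl e M → Prop)
    (hMrefl : ∀ a, nbM a a) (hMsymm : ∀ a b, nbM a b → nbM b a)
    (hPrefl : ∀ x, nbP x x) (hPsymm : ∀ x y, nbP x y → nbP y x)
    (hcompat : ∀ x y : Bdl e M, nbP x y → nbM x.1 y.1)
    (hGinv : ∀ (x y : Bdl e M) (g : e ⟶ e), nbP x y → nbP (x.act g) (y.act g))
    (hne : ∀ a : M, Nonempty (e ⟶ (a : Φ)))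
    (k : ℕ)
    (hsub : ∀ (a : Fin (k + 1) → M), (∀ i j, nbM (a i) (a j)) →
      ∀ x0 : e ⟶ (a 0 : Φ), ∃ x : (i : Fin (k + 1)) → (e ⟶ (a i : Φ)),
        x 0 = x0 ∧ IsSimplex nbP (fun i => ⟨a i, x i⟩)) :
    ∃ check : {θ : ∀ u : Fin (k + 1) → Bdl e M, IsSimplex nbP u → (e ⟶ e) //
        Horizontal nbP θ ∧ Equivariant nbP θ} →
        ∀ a : Fin (k + 1) → M, (∀ i j, nbM (a i) (a j)) → ((a 0 : Φ) ⟶ (a 0 : Φ)),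
      -- `check θ` is computed by the formula `θ̌(a) = u₀ ∘ θ(u) ∘ u₀⁻¹` for ANY lift `u`
      (∀ (θ : {θ : ∀ u : Fin (k + 1) → Bdl e M, IsSimplex nbP u → (e ⟶ e) //
          Horizontal nbP θ ∧ Equivariant nbP θ})
        (a : Fin (k + 1) → M) (ha : ∀ i j, nbM (a i) (a j))
        (x : (i : Fin (k + 1)) → (e ⟶ (a i : Φ)))
        (hx : IsSimplex nbP (fun i => ⟨a i, x i⟩)),
        check θ a ha =
          Groupoid.inv (x 0) ≫ θ.1 (fun i => ⟨a i, x i⟩) hx ≫ x 0) ∧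
      -- `α ↦ α̂` lands in horizontal equivariant forms
      (∀ α : ∀ a : Fin (k + 1) → M, (∀ i j, nbM (a i) (a j)) → ((a 0 : Φ) ⟶ (a 0 : Φ)),
        Horizontal nbP (hatForm hcompat α) ∧ Equivariant nbP (hatForm hcompat α)) ∧
      -- `check ∘ hat = id`
      (∀ (α : ∀ a : Fin (k + 1) → M, (∀ i j, nbM (a i) (a j)) → ((a 0 : Φ) ⟶ (a 0 : Φ)))
        (hα : Horizontal nbP (hatForm hcompat α) ∧ Equivariant nbP (hatForm hcompat α)),
        check ⟨hatForm hcompat α, hα⟩ = α) ∧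
      -- `hat ∘ check = id`
      (∀ θ : {θ : ∀ u : Fin (k + 1) → Bdl e M, IsSimplex nbP u → (e ⟶ e) //
          Horizontal nbP θ ∧ Equivariant nbP θ},
        hatForm hcompat (check θ) = θ.1) := by

  classical
  have tcong : ∀ (θ : ∀ u : Fin (k + 1) → Bdl e M, IsSimplex nbP u → (e ⟶ e))
      (u v : Fin (k + 1) → Bdl e M) (hu : IsSimplex nbP u) (hv : IsSimplex nbP v),
      u = v → θ u hu = θ v hv := by
    rintro θ u v hu hv rfl; rfl
  have key : ∀ (θ : {θ : ∀ u : Fin (k + 1) → Bdl e M, IsSimplex nbP u → (e ⟶ e) //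
        Horizontal nbP θ ∧ Equivariant nbP θ})
      (a : Fin (k + 1) → M) (x y : ∀ i, e ⟶ (a i : Φ))
      (hx : IsSimplex nbP (fun i => ⟨a i, x i⟩))
      (hy : IsSimplex nbP (fun i => ⟨a i, y i⟩)),
      Groupoid.inv (x 0) ≫ θ.1 (fun i => ⟨a i, x i⟩) hx ≫ x 0 =
      Groupoid.inv (y 0) ≫ θ.1 (fun i => ⟨a i, y i⟩) hy ≫ y 0 := by
    intro θ a x y hx hy
    set g : e ⟶ e := x 0 ≫ Groupoid.inv (y 0) with hg
    have hw : IsSimplex nbP (fun i => Bdl.act (⟨a i, y i⟩ : Bdl e M) g) :=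
      fun i j => hGinv _ _ g (hy i j)
    have weq : (fun i => Bdl.act (⟨a i, y i⟩ : Bdl e M) g) =
        Fin.cases ((fun i => (⟨a i, x i⟩ : Bdl e M)) 0)
          (fun i => Bdl.act ((fun j => (⟨a j, x j⟩ : Bdl e M)) i.succ)
            (g ≫ y i.succ ≫ Groupoid.inv (x i.succ))) := by
      funext i
      refine Fin.cases ?_ (fun i => ?_) i
      · simp [Bdl.act, hg, Category.assoc]; rfl
      · simp [Bdl.act, Category.assoc]; rfl
    have hw' : IsSimplex nbP (Fin.cases ((fun i => (⟨a i, x i⟩ : Bdl e M)) 0)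
          (fun i => Bdl.act ((fun j => (⟨a j, x j⟩ : Bdl e M)) i.succ)
            (g ≫ y i.succ ≫ Groupoid.inv (x i.succ)))) := weq ▸ hw
    have h1 : θ.1 (fun i => Bdl.act (⟨a i, y i⟩ : Bdl e M) g) hw =
        θ.1 (fun i => ⟨a i, x i⟩) hx :=
      (tcong θ.1 _ _ hw hw' weq).trans
        (θ.2.1 (fun i => ⟨a i, x i⟩) _ hx hw')
    have h2 := θ.2.2 (fun i => ⟨a i, y i⟩) g hy hw
    rw [h2] at h1
    rw [← h1, hg]
    simp [Groupoid.inv_eq_inv, Category.assoc]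
  refine ⟨fun θ a ha =>
      Groupoid.inv ((hsub a ha (hne (a 0)).some).choose 0) ≫
        θ.1 (fun i => ⟨a i, (hsub a ha (hne (a 0)).some).choose i⟩)
          (hsub a ha (hne (a 0)).some).choose_spec.2 ≫
        (hsub a ha (hne (a 0)).some).choose 0, ?_, ?_, ?_, ?_⟩
  · intro θ a ha x hx
    exact key θ a _ x (hsub a ha (hne (a 0)).some).choose_spec.2 hx
  · intro α
    have hatcong : ∀ (b c : Fin (k + 1) → M) (x : ∀ i, e ⟶ (b i : Φ))
        (y : ∀ i, e ⟶ (c i : Φ))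
        (hb : IsSimplex nbP (fun i => ⟨b i, x i⟩))
        (hc : IsSimplex nbP (fun i => ⟨c i, y i⟩))
        (hproj : b = c) (h0 : HEq (x 0) (y 0)),
        hatForm hcompat α (fun i => ⟨b i, x i⟩) hb =
        hatForm hcompat α (fun i => ⟨c i, y i⟩) hc := by
      rintro b c x y hb hc rfl h0
      calc hatForm hcompat α (fun i => ⟨b i, x i⟩) hb
          = x 0 ≫ α b (fun i j => hcompat _ _ (hb i j)) ≫ Groupoid.inv (x 0) := rfl
        _ = y 0 ≫ α b (fun i j => hcompat _ _ (hb i j)) ≫ Groupoid.inv (y 0) := by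
            rw [eq_of_heq h0]
        _ = hatForm hcompat α (fun i => ⟨b i, y i⟩) hc := rfl
    constructor
    · intro u g hu hu'
      set v : Fin (k + 1) → Bdl e M :=
        fun i => Fin.cases (u 0) (fun i => (u i.succ).act (g i)) i with hv
      have c0 : v 0 = u 0 := by simp [hv]
      have hpr : (fun i => (v i).1) = fun i => (u i).1 := by
        funext i
        refine Fin.cases ?_ (fun i => ?_) i <;> (simp [hv, Bdl.act]; rfl)
      exact hatcong (fun i => (v i).1) (fun i => (u i).1)
        (fun i => (v i).2) (fun i => (u i).2) hu' hu hpr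
        (congr_arg_heq Sigma.snd c0)
    · intro u g hu hu'
      have step : hatForm hcompat α (fun i => (u i).act g) hu' =
          (g ≫ (u 0).2) ≫ α (fun i => (u i).1) (fun i j => hcompat _ _ (hu i j)) ≫
            Groupoid.inv (g ≫ (u 0).2) := rfl
      rw [step]
      show _ = g ≫ hatForm hcompat α u hu ≫ Groupoid.inv g
      unfold hatForm
      simp [Groupoid.inv_eq_inv, Category.assoc]
  · intro α hα
    funext a ha
    have hc := (hsub a ha (hne (a 0)).some).choose_spec.2
    have step : hatForm hcompat α
        (fun i => ⟨a i, (hsub a ha (hne (a 0)).some).choose i⟩) hc =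
        (hsub a ha (hne (a 0)).some).choose 0 ≫ α a ha ≫
          Groupoid.inv ((hsub a ha (hne (a 0)).some).choose 0) := rfl
    show Groupoid.inv ((hsub a ha (hne (a 0)).some).choose 0) ≫
      hatForm hcompat α (fun i => ⟨a i, (hsub a ha (hne (a 0)).some).choose i⟩) hc ≫
      (hsub a ha (hne (a 0)).some).choose 0 = α a ha
    rw [step]
    simp [Groupoid.inv_eq_inv, Category.assoc]
  · intro θ
    funext u hu
    have hx : IsSimplex nbP (fun i => (⟨(u i).1, (u i).2⟩ : Bdl e M)) := hu
    have hk := key θ (fun i => (u i).1)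
      ((hsub (fun i => (u i).1) (fun i j => hcompat _ _ (hu i j))
        (hne ((u 0).1)).some).choose) (fun i => (u i).2)
      ((hsub (fun i => (u i).1) (fun i j => hcompat _ _ (hu i j))
        (hne ((u 0).1)).some).choose_spec.2) hx
    have step : hatForm hcompat
        (fun a ha => Groupoid.inv ((hsub a ha (hne (a 0)).some).choose 0) ≫
          θ.1 (fun i => ⟨a i, (hsub a ha (hne (a 0)).some).choose i⟩)
            (hsub a ha (hne (a 0)).some).choose_spec.2 ≫
          (hsub a ha (hne (a 0)).some).choose 0) u hu =
        (u 0).2 ≫ (Groupoid.inv ((hsub (fun i => (u i).1)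
            (fun i j => hcompat _ _ (hu i j)) (hne ((u 0).1)).some).choose 0) ≫
          θ.1 (fun i => ⟨(u i).1, (hsub (fun i => (u i).1)
              (fun i j => hcompat _ _ (hu i j)) (hne ((u 0).1)).some).choose i⟩)
            (hsub (fun i => (u i).1) (fun i j => hcompat _ _ (hu i j))
              (hne ((u 0).1)).some).choose_spec.2 ≫
          (hsub (fun i => (u i).1) (fun i j => hcompat _ _ (hu i j))
            (hne ((u 0).1)).some).choose 0) ≫ Groupoid.inv (u 0).2 := rfl
    rw [step, hk]
    have h3 : θ.1 (fun i => (⟨(u i).1, (u i).2⟩ : Bdl e M)) hx = θ.1 u hu := rfl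
    rw [h3]
    simp [Groupoid.inv_eq_inv]
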